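/- For all real Y₁, Y₂, Z, setting Z̃ = −Z, Ỹ₁ = Y₁ − log(1+e^{−2Z}), Ỹ₂ = Y₂ + log(1+e^{2Z}), the identity X_{Y₂} · R · X_{Y₁} = X_{Ỹ₂} · R · X_{Z̃} · F · X_{Z̃} · R · X_{Ỹ₁} holds. -/

import Mathlib

open Matrix Real

noncomputable def Xm (Z : ℝ) : Matrix (Fin 2) (Fin 2) ℝ :=
  !![0, -Real.exp (Z / 2); Real.exp (-Z / 2), 0]

def Fm : Matrix (Fin 2) (Fin 2) ℝ := !![0, 1; -1, 0]
def Rm : Matrix (Fin 2) (Fin 2) ℝ := !![1, 1; -1, 0]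

theorem pending_flip_identity_3 (Y₁ Y₂ Z : ℝ) :
    Xm Y₂ * Rm * Xm Y₁ =
      Xm (Y₂ + Real.log (1 + Real.exp (2 * Z))) * Rm * Xm (-Z) * Fm * Xm (-Z) * Rm *
        Xm (Y₁ - Real.log (1 + Real.exp (-2 * Z))) := by
  have hp : (0:ℝ) < 1 + Real.exp (-2 * Z) := by positivity
  have hfac : (1:ℝ) + Real.exp (2 * Z) = Real.exp (2*Z) * (1 + Real.exp (-2 * Z)) := by
    rw [mul_add, mul_one, ← Real.exp_add]
    rw [show 2*Z + -2*Z = 0 by ring, Real.exp_zero, add_comm]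
  have hL : Real.log (1 + Real.exp (2 * Z)) = 2 * Z + Real.log (1 + Real.exp (-2 * Z)) := by
    rw [hfac, Real.log_mul (Real.exp_ne_zero _) (ne_of_gt hp), Real.log_exp]
  have hE : Real.exp (Real.log (1 + Real.exp (-2 * Z))) = 1 + Real.exp (-2*Z) :=
    Real.exp_log hp
  set L := Real.log (1 + Real.exp (-2 * Z)) with hLdef
  ext i j
  fin_cases i <;> fin_cases j <;>
    simp [Xm, Rm, Fm, Matrix.mul_apply, Fin.sum_univ_two, hL, ← Real.exp_add]
  · ring
  · ring
  · rw [add_mul, ← Real.exp_add, ← Real.exp_add,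
      show (-L + -(2*Z) + -Y₂)/2 + Z/2 + Z/2 + (Y₁ - L)/2 = (-Y₂/2 + Y₁/2) + -L by ring,
      show (-L + -(2*Z) + -Y₂)/2 + -Z/2 + -Z/2 + (Y₁ - L)/2
        = ((-Y₂/2 + Y₁/2) + (-2*Z)) + -L by ring,
      Real.exp_add ((-Y₂/2 + Y₁/2) + (-2*Z)) (-L),
      Real.exp_add (-Y₂/2 + Y₁/2) (-L),
      Real.exp_add (-Y₂/2 + Y₁/2) (-2*Z),
      Real.exp_neg, hE]
    field_simp
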